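/- The language of the generalized Thue-Morse word t_{b,m} is invariant under each antimorphism Ψ_x defined letterwise by Ψ_x(k) = x − k (mod m) and reversing the order of letters: if w is a factor of t_{b,m}, then so is Ψ_x(w). -/

import Mathlib

open Filter Topology

def pref {A : Type*} (u : ℕ → A) (n : ℕ) : List A :=
  (List.range n).map u

def isFactor {A : Type*} (u : ℕ → A) (w : List A) : Prop :=
  ∃ i, w = (List.range w.length).map (fun j => u (i + j))

def occ {A : Type*} [DecidableEq A] (w v : List A) : ℕ :=
  (List.range (v.length + 1)).countP (fun i => decide ((v.drop i).take w.length = w))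

def freq {A : Type*} [DecidableEq A] (u : ℕ → A) (w : List A) (r : ℝ) : Prop :=
  Tendsto (fun n => (occ w (pref u n) : ℝ) / n) atTop (𝓝 r)

def phiL (b : ℕ) {m : ℕ} (k : ZMod m) : List (ZMod m) :=
  (List.range b).map (fun i => k + (i : ZMod m))

def phiW (b : ℕ) {m : ℕ} (s : List (ZMod m)) : List (ZMod m) :=
  s.flatMap (phiL b)

def isTM (b m : ℕ) (u : ℕ → ZMod m) : Prop :=
  u 0 = 0 ∧ ∀ n i, i < b → u (b * n + i) = u n + (i : ZMod m)

section Aux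
variable {b m : ℕ} {u : ℕ → ZMod m}

lemma tm_pow (hb : 2 ≤ b) (hu : isTM b m u) :
    ∀ L n k, k < b ^ L → u (b ^ L * n + k) = u n + u k := by
  intro L
  induction L with
  | zero =>
    intro n k hk
    rw [pow_zero] at hk
    interval_cases k
    simp [hu.1]
  | succ L ih =>
    intro n k hk
    have hb0 : 0 < b := by omega
    have hq : k / b < b ^ L := Nat.div_lt_of_lt_mul (by rwa [pow_succ, mul_comm] at hk)
    have hr : k % b < b := Nat.mod_lt _ hb0
    have key : b ^ (L+1) * n + k = b * (b ^ L * n + k / b) + k % b := by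
      conv_lhs => rw [← Nat.div_add_mod k b]
      rw [pow_succ]; ring
    rw [key, hu.2 _ _ hr, ih n _ hq]
    have huk : u k = u (k / b) + ((k % b : ℕ) : ZMod m) := by
      conv_lhs => rw [← Nat.div_add_mod k b]
      exact hu.2 _ _ hr
    rw [huk]; ring

lemma tm_compl (hb : 2 ≤ b) (hu : isTM b m u) :
    ∀ L k, k < b ^ L → u (b ^ L - 1 - k) = ((L * (b - 1) : ℕ) : ZMod m) - u k := by
  intro L
  induction L with
  | zero =>
    intro k hk
    rw [pow_zero] at hk
    interval_cases k
    simp [hu.1]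
  | succ L ih =>
    intro k hk
    have hb0 : 0 < b := by omega
    obtain ⟨q, r, hqB, hrb, hk2⟩ : ∃ q r, q < b ^ L ∧ r < b ∧ k = b * q + r :=
      ⟨k / b, k % b, Nat.div_lt_of_lt_mul (by rwa [pow_succ, mul_comm] at hk),
        Nat.mod_lt _ hb0, (Nat.div_add_mod k b).symm⟩
    have key : b ^ (L+1) - 1 - k = b * (b ^ L - 1 - q) + (b - 1 - r) := by
      have h1 : b * (b ^ L - 1 - q) = b * b ^ L - b * (q + 1) := by
        rw [← Nat.mul_sub]; congr 1; omega
      have h2 : b * (q + 1) ≤ b * b ^ L := Nat.mul_le_mul_left _ hqB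
      have h3 : b * (q + 1) = b * q + b := by ring
      have h4 : b ^ (L+1) = b * b ^ L := by rw [pow_succ, mul_comm]
      omega
    rw [key, hu.2 _ _ (show b - 1 - r < b by omega), ih q hqB]
    have huk : u k = u q + (r : ZMod m) := by rw [hk2]; exact hu.2 _ _ hrb
    have hcast : ((b - 1 - r : ℕ) : ZMod m) = ((b - 1 : ℕ) : ZMod m) - (r : ZMod m) :=
      Nat.cast_sub (by omega)
    have hcast2 : (((L+1) * (b - 1) : ℕ) : ZMod m)
        = ((L * (b - 1) : ℕ) : ZMod m) + ((b - 1 : ℕ) : ZMod m) := by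
      push_cast; ring
    rw [huk, hcast, hcast2]; ring

lemma tm_surj (hb : 2 ≤ b) (hu : isTM b m u) : ∀ a : ℕ, ∃ q, u q = (a : ZMod m) := by
  intro a
  induction a with
  | zero => exact ⟨0, by simp [hu.1]⟩
  | succ a ih =>
    obtain ⟨q, hq⟩ := ih
    refine ⟨b * q + 1, ?_⟩
    rw [hu.2 q 1 (by omega), hq]
    push_cast; ring

lemma tm_aux (hb : 2 ≤ b) (hm : 1 ≤ m) (hu : isTM b m u) (x : ZMod m) (i n : ℕ) :
    ∃ j0, ∀ t, t < n → u (j0 + t) = x - u (i + (n - 1 - t)) := by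
  haveI : NeZero m := ⟨by omega⟩
  obtain ⟨L, hL⟩ : ∃ L, i + n < b ^ L := ⟨i + n, Nat.lt_pow_self (by omega : 1 < b)⟩
  set c : ZMod m := ((L * (b - 1) : ℕ) : ZMod m) with hc
  obtain ⟨q, hq⟩ := tm_surj hb hu ((x - c).val)
  rw [ZMod.natCast_val, ZMod.cast_id] at hq
  refine ⟨b ^ L * q + (b ^ L - (i + n)), ?_⟩
  intro t ht
  have hs : b ^ L - (i + n) + t < b ^ L := by omega
  rw [add_assoc, tm_pow hb hu L q _ hs, hq]
  have e2 : b ^ L - (i + n) + t = b ^ L - 1 - (i + (n - 1 - t)) := by omega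
  rw [e2, tm_compl hb hu L _ (by omega)]
  ring

end Aux

theorem tm_invariant_Psi (b m : ℕ) (hb : 2 ≤ b) (hm : 1 ≤ m) (u : ℕ → ZMod m)
    (hu : isTM b m u) (x : ZMod m) (w : List (ZMod m)) (hw : isFactor u w) :
    isFactor u ((w.map (fun k => x - k)).reverse) := by
  obtain ⟨i, hi⟩ := hw
  obtain ⟨j0, hj0⟩ := tm_aux hb hm hu x i w.length
  refine ⟨j0, ?_⟩
  have hw' : ∀ k (hk : k < w.length), w[k] = u (i + k) := by
    intro k hk
    rw [List.getElem_of_eq hi hk]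
    simp
  apply List.ext_getElem
  · simp
  intro j h1 h2
  have hj : j < w.length := by simpa using h1
  simp only [List.getElem_map, List.getElem_range, List.getElem_reverse,
    List.length_map, List.length_reverse]
  rw [hw' _ (by omega), hj0 j hj]
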